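/- Let 0 ≤ i ≤ m and let g be an element of the subgroup of G_m generated by {s_i, s_{i+1}, …, s_m}. Then there exists a word w on the letters {s_i, …, s_m} and their inverses, of length exactly |g|_{G_m}, which represents g in G_m. -/

import Mathlib

/-- Iterated exponential: `E 0 n = n`, `E (m+1) n = 2 ^ E m n`. -/
def E : ℕ → ℕ → ℕ
  | 0, n => n
  | m + 1, n => 2 ^ E m n

/-- `Preceq f g` iff there is `C > 0` with `f n ≤ C * g (C*n + C) + C*n + C` for all `n`. -/
def Preceq (f g : ℕ → ℕ) : Prop :=
  ∃ C : ℕ, 0 < C ∧ ∀ n : ℕ, f n ≤ C * g (C * n + C) + C * n + C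

/-- Defining relations of the `m`-th iterated Baumslag–Solitar group:
`s_{i+1} s_i s_{i+1}⁻¹ = s_i²` for `i = 0, …, m-1`. -/
def bsRels (m : ℕ) : Set (FreeGroup (Fin (m + 1))) :=
  Set.range (fun i : Fin m =>
    FreeGroup.of i.succ * FreeGroup.of i.castSucc * (FreeGroup.of i.succ)⁻¹ *
      (FreeGroup.of i.castSucc ^ 2)⁻¹)

/-- The `m`-th iterated Baumslag–Solitar group. -/
abbrev IterBS (m : ℕ) := PresentedGroup (bsRels m)

/-- The generator `s_i` of `IterBS m`. -/
def sg {m : ℕ} (i : Fin (m + 1)) : IterBS m := PresentedGroup.of i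

/-- The element of `IterBS m` represented by a word on the generators and their inverses. -/
def evalWord {m : ℕ} (w : List (Fin (m + 1) × Bool)) : IterBS m :=
  (w.map (fun p => if p.2 then sg p.1 else (sg p.1)⁻¹)).prod

/-- Word length of `g ∈ IterBS m` with respect to the generators `s_0, …, s_m`. -/
noncomputable def wl {m : ℕ} (g : IterBS m) : ℕ :=
  sInf { n | ∃ w : List (Fin (m + 1) × Bool), w.length = n ∧ evalWord w = g }

/-- The minimal word length of a conjugator taking `u` to `v`. -/
noncomputable def cLen {m : ℕ} (u v : IterBS m) : ℕ :=
  sInf { n | ∃ γ : IterBS m, γ * u * γ⁻¹ = v ∧ wl γ = n }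

/-- The conjugator length function of `IterBS m`. -/
noncomputable def CLGm (m : ℕ) (n : ℕ) : ℕ :=
  sSup { c | ∃ u v : List (Fin (m + 1) × Bool),
    u.length + v.length ≤ n ∧
    (∃ γ : IterBS m, γ * evalWord u * γ⁻¹ = evalWord v) ∧
    c = cLen (evalWord u) (evalWord v) }

section Retraction

variable {m i : ℕ}

/-- Relation check for the retraction killing low generators. -/
lemma retr_rels (m i : ℕ) :
    ∀ r ∈ bsRels m, FreeGroup.lift
      (fun j : Fin (m + 1) => if i ≤ (j : ℕ) then sg j else 1) r = 1 := by
  rintro r ⟨j, rfl⟩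
  simp only [map_mul, map_inv, map_pow, FreeGroup.lift_apply_of]
  have hsucc : ((j.succ : Fin (m + 1)) : ℕ) = (j : ℕ) + 1 := rfl
  have hcast : ((j.castSucc : Fin (m + 1)) : ℕ) = (j : ℕ) := rfl
  by_cases h1 : i ≤ (j : ℕ)
  · have h2 : i ≤ (j : ℕ) + 1 := le_trans h1 (Nat.le_succ _)
    rw [hsucc, hcast, if_pos h1, if_pos h2]
    set π := QuotientGroup.mk' (Subgroup.normalClosure (bsRels m)) with hπ
    have hkey : π (FreeGroup.of j.succ * FreeGroup.of j.castSucc *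
        (FreeGroup.of j.succ)⁻¹ * (FreeGroup.of j.castSucc ^ 2)⁻¹) = 1 := by
      rw [QuotientGroup.mk'_apply, QuotientGroup.eq_one_iff]
      exact Subgroup.subset_normalClosure ⟨j, rfl⟩
    have hexp : sg j.succ * sg j.castSucc * (sg j.succ)⁻¹ * ((sg j.castSucc : IterBS m) ^ 2)⁻¹ =
        π (FreeGroup.of j.succ * FreeGroup.of j.castSucc *
          (FreeGroup.of j.succ)⁻¹ * (FreeGroup.of j.castSucc ^ 2)⁻¹) := by
      rw [map_mul, map_mul, map_inv, map_inv, map_pow]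
      rfl
    rw [hexp, hkey]
    rfl
  · by_cases h2 : i ≤ (j : ℕ) + 1
    · rw [hsucc, hcast, if_neg h1, if_pos h2]
      simp
    · rw [hsucc, hcast, if_neg h1, if_neg h2]
      simp

/-- The retraction of `IterBS m` killing `s_0, …, s_{i-1}`. -/
noncomputable def retr (m i : ℕ) : IterBS m →* IterBS m :=
  PresentedGroup.toGroup (retr_rels m i)

lemma retr_sg (j : Fin (m + 1)) :
    retr m i (sg j) = if i ≤ (j : ℕ) then sg j else 1 :=
  PresentedGroup.toGroup.of _

lemma retr_evalWord (w : List (Fin (m + 1) × Bool)) :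
    retr m i (evalWord w) = evalWord (w.filter (fun p => i ≤ (p.1 : ℕ))) := by
  induction w with
  | nil => simp [evalWord]
  | cons a w ih =>
    have hcons : evalWord (a :: w) =
        (if a.2 then sg a.1 else (sg a.1)⁻¹) * evalWord w := by
      simp [evalWord]
    rw [hcons, map_mul, ih]
    by_cases h : i ≤ (a.1 : ℕ)
    · have : (a :: w).filter (fun p => i ≤ (p.1 : ℕ)) =
        a :: w.filter (fun p => i ≤ (p.1 : ℕ)) := by
        simp [List.filter_cons, h]
      rw [this]
      have : evalWord (a :: w.filter (fun p => i ≤ (p.1 : ℕ))) =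
          (if a.2 then sg a.1 else (sg a.1)⁻¹) * evalWord (w.filter (fun p => i ≤ (p.1 : ℕ))) := by
        simp [evalWord]
      rw [this]
      congr 1
      by_cases hb : a.2 <;> simp [hb, retr_sg, h]
    · have : (a :: w).filter (fun p => i ≤ (p.1 : ℕ)) =
        w.filter (fun p => i ≤ (p.1 : ℕ)) := by
        simp [List.filter_cons, h]
      rw [this]
      by_cases hb : a.2 <;> simp [hb, retr_sg, h]

lemma retr_fix {g : IterBS m}
    (hg : g ∈ Subgroup.closure (sg '' { j : Fin (m + 1) | i ≤ (j : ℕ) })) :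
    retr m i g = g := by
  induction hg using Subgroup.closure_induction with
  | mem x hx =>
    obtain ⟨j, hj, rfl⟩ := hx
    rw [retr_sg, if_pos (show i ≤ (j : ℕ) from hj)]
  | one => simp
  | mul x y _ _ hx hy => rw [map_mul, hx, hy]
  | inv x _ hx => rw [map_inv, hx]

lemma evalWord_rev_inv (u : List (Fin (m + 1) × Bool)) :
    evalWord (u.reverse.map fun p => (p.1, !p.2)) = (evalWord u)⁻¹ := by
  induction u with
  | nil => simp [evalWord]
  | cons a u ihu =>
    simp only [List.reverse_cons, List.map_append, List.map_cons, List.map_nil]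
    have h1 : evalWord (u.reverse.map (fun p => (p.1, !p.2)) ++ [(a.1, !a.2)]) =
        evalWord (u.reverse.map fun p => (p.1, !p.2)) * evalWord [(a.1, !a.2)] := by
      simp [evalWord]
    rw [h1, ihu]
    have hc : evalWord (a :: u) = (if a.2 then sg a.1 else (sg a.1)⁻¹) * evalWord u := by
      simp [evalWord]
    rw [hc, mul_inv_rev]
    congr 1
    by_cases hb : a.2 <;> simp [hb, evalWord]

lemma exists_word (g : IterBS m) :
    ∃ w : List (Fin (m + 1) × Bool), evalWord w = g := by
  have hg : g ∈ Subgroup.closure (Set.range (PresentedGroup.of :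
      Fin (m + 1) → IterBS m)) := by
    rw [PresentedGroup.closure_range_of]; trivial
  induction hg using Subgroup.closure_induction with
  | mem x hx =>
    obtain ⟨j, rfl⟩ := hx
    exact ⟨[(j, true)], by simp [evalWord, sg]⟩
  | one => exact ⟨[], by simp [evalWord]⟩
  | mul x y _ _ hx hy =>
    obtain ⟨u, hu⟩ := hx; obtain ⟨v, hv⟩ := hy
    refine ⟨u ++ v, ?_⟩
    rw [← hu, ← hv]
    simp only [evalWord, List.map_append, List.prod_append]
  | inv x _ hx =>
    obtain ⟨u, hu⟩ := hx
    exact ⟨(u.reverse.map fun p => (p.1, !p.2)), by rw [evalWord_rev_inv, hu]⟩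

end Retraction

/-- If `g` lies in the subgroup of `G_m` generated by `s_i, …, s_m`, then `g` is
represented by a word on `{s_i, …, s_m}` of length exactly `|g|_{G_m}`. -/
theorem word_on_high_generators (m i : ℕ) (hi : i ≤ m) (g : IterBS m)
    (hg : g ∈ Subgroup.closure (sg '' { j : Fin (m + 1) | i ≤ (j : ℕ) })) :
    ∃ w : List (Fin (m + 1) × Bool), (∀ p ∈ w, i ≤ (p.1 : ℕ)) ∧
      w.length = wl g ∧ evalWord w = g := by
  obtain ⟨w0, hw0⟩ := exists_word g
  have hne : wl g ∈ { n | ∃ w : List (Fin (m + 1) × Bool), w.length = n ∧ evalWord w = g } :=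
    Nat.sInf_mem ⟨w0.length, w0, rfl, hw0⟩
  obtain ⟨w, hwlen, hwg⟩ := hne
  set w' := w.filter (fun p => i ≤ (p.1 : ℕ)) with hw'
  have hev : evalWord w' = g := by
    rw [hw', ← retr_evalWord, hwg, retr_fix hg]
  have h1 : wl g ≤ w'.length := Nat.sInf_le ⟨w', rfl, hev⟩
  have h2 : w'.length ≤ w.length := List.length_filter_le _ _
  refine ⟨w', ?_, ?_, hev⟩
  · intro p hp
    have := List.of_mem_filter hp
    simpa using this
  · omega
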